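/- Let N be a Petri net and N' the reduced net obtained by removing a set U of transitions such that no minimal firing sequence to the goal g uses any transition of U. Then g is reachable in N if and only if g is reachable in N'. -/
import Mathlib


structure PetriNet (P T : Type) where
  pre : T → Set P
  post : T → Set P
  M0 : Set P

namespace PetriNet

variable {P T : Type}

/-- The marking obtained by firing `t` from `M`. -/
def fire (N : PetriNet P T) (M : Set P) (t : T) : Set P :=
  (M \ N.pre t) ∪ N.post t

/-- `w` is a firing sequence (each transition enabled in turn) from `M`. -/
def enabledSeq (N : PetriNet P T) : Set P → List T → Prop
  | _, [] => True
  | M, t :: w => N.pre t ⊆ M ∧ enabledSeq N (N.fire M t) w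

/-- The marking reached after firing the word `w` from `M`. -/
def exec (N : PetriNet P T) : Set P → List T → Set P
  | M, [] => M
  | M, t :: w => exec N (N.fire M t) w

/-- The list `M0, M1, …, Mn` of markings visited by the word `w` from `M`. -/
def visited (N : PetriNet P T) : Set P → List T → List (Set P)
  | M, [] => [M]
  | M, t :: w => M :: visited N (N.fire M t) w

/-- `w` is a minimal firing sequence from `M` to goal `g`: it is a firing
sequence reaching `g` and no feasible permutation of it is cycling
(visits the same marking twice). -/
def MinimalFrom (N : PetriNet P T) (M g : Set P) (w : List T) : Prop :=
  N.enabledSeq M w ∧ N.exec M w = g ∧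
    ∀ w' : List T, w'.Perm w → N.enabledSeq M w' → (N.visited M w').Nodup

/-- `M` is reachable from the initial marking. -/
def Reach (N : PetriNet P T) (M : Set P) : Prop :=
  ∃ w : List T, N.enabledSeq N.M0 w ∧ N.exec N.M0 w = M

/-- Safety condition of the paper. -/
def Safe (N : PetriNet P T) : Prop :=
  ∀ M : Set P, N.Reach M → ∀ t : T, N.pre t ⊆ M →
    ∀ p ∈ M ∩ N.fire M t, p ∈ N.pre t ∩ N.post t ∨ p ∉ N.pre t ∪ N.post t

/-- The reduced net `N \ U`: same places and initial marking,
transitions restricted to `T \ U`. -/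
def restrict (N : PetriNet P T) (U : Set T) : PetriNet P {t : T // t ∉ U} where
  pre := fun t => N.pre t.1
  post := fun t => N.post t.1
  M0 := N.M0

end PetriNet

namespace PetriNetAux

open PetriNet

attribute [local instance] Classical.propDecidable

variable {P T : Type}

noncomputable def chi (M : Set P) (p : P) : ℤ := if p ∈ M then 1 else 0

theorem exec_append (N : PetriNet P T) (M : Set P) (a b : List T) :
    N.exec M (a ++ b) = N.exec (N.exec M a) b := by
  induction a generalizing M with
  | nil => rfl
  | cons t v ih => simp [PetriNet.exec, ih]

theorem enabled_append (N : PetriNet P T) (M : Set P) (a b : List T) :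
    N.enabledSeq M (a ++ b) ↔ N.enabledSeq M a ∧ N.enabledSeq (N.exec M a) b := by
  induction a generalizing M with
  | nil => simp [PetriNet.enabledSeq, PetriNet.exec]
  | cons t v ih => simp [PetriNet.enabledSeq, PetriNet.exec, ih, and_assoc]

theorem reach_exec (N : PetriNet P T) {M : Set P} (hM : N.Reach M)
    {w : List T} (hw : N.enabledSeq M w) : N.Reach (N.exec M w) := by
  obtain ⟨a, ha, hae⟩ := hM
  exact ⟨a ++ w, by rw [enabled_append]; exact ⟨ha, hae ▸ hw⟩,
    by rw [exec_append, hae]⟩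

theorem safe_not_mem (N : PetriNet P T) (hsafe : N.Safe) {M : Set P}
    (hM : N.Reach M) {t : T} (ht : N.pre t ⊆ M) {p : P}
    (hpost : p ∈ N.post t) (hpre : p ∉ N.pre t) : p ∉ M := by
  intro hpM
  have := hsafe M hM t ht p ⟨hpM, Or.inr hpost⟩
  rcases this with h | h
  · exact hpre h.1
  · exact h (Or.inr hpost)

theorem chi_fire (N : PetriNet P T) (hsafe : N.Safe) {M : Set P}
    (hM : N.Reach M) {t : T} (ht : N.pre t ⊆ M) (p : P) :
    chi (N.fire M t) p = chi M p - chi (N.pre t) p + chi (N.post t) p := by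
  by_cases h1 : p ∈ N.pre t
  · have hpM : p ∈ M := ht h1
    by_cases h2 : p ∈ N.post t
    · have : p ∈ N.fire M t := Or.inr h2
      simp [chi, h1, h2, hpM, this]
    · have : p ∉ N.fire M t := by
        intro h; rcases h with h | h
        · exact h.2 h1
        · exact h2 h
      simp [chi, h1, h2, hpM, this]
  · by_cases h2 : p ∈ N.post t
    · have hpM : p ∉ M := safe_not_mem N hsafe hM ht h2 h1
      have : p ∈ N.fire M t := Or.inr h2
      simp [chi, h1, h2, hpM, this]
    · have : p ∈ N.fire M t ↔ p ∈ M := by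
        constructor
        · rintro (h | h)
          · exact h.1
          · exact absurd h h2
        · exact fun h => Or.inl ⟨h, h1⟩
      by_cases hpM : p ∈ M <;> simp [chi, h1, h2, hpM, this]

theorem chi_exec (N : PetriNet P T) (hsafe : N.Safe) {M : Set P}
    (hM : N.Reach M) {w : List T} (hw : N.enabledSeq M w) (p : P) :
    chi (N.exec M w) p =
      chi M p + ((w.map (fun t => chi (N.post t) p - chi (N.pre t) p)).sum) := by
  induction w generalizing M with
  | nil => simp [PetriNet.exec]
  | cons t v ih =>
    obtain ⟨ht, hv⟩ := hw
    have hM' : N.Reach (N.fire M t) := by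
      have := reach_exec N hM (w := [t]) ⟨ht, trivial⟩
      simpa [PetriNet.exec] using this
    have := ih hM' hv
    simp only [PetriNet.exec, List.map_cons, List.sum_cons]
    rw [this, chi_fire N hsafe hM ht p]
    ring

theorem mem_of_chi (A B : Set P) (p : P) (h : chi A p = chi B p) :
    p ∈ A ↔ p ∈ B := by
  by_cases hA : p ∈ A <;> by_cases hB : p ∈ B <;> simp_all [chi]

theorem exec_perm (N : PetriNet P T) (hsafe : N.Safe) {M : Set P}
    (hM : N.Reach M) {w w' : List T} (hw : N.enabledSeq M w)
    (hw' : N.enabledSeq M w') (hp : w'.Perm w) :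
    N.exec M w' = N.exec M w := by
  ext p
  refine mem_of_chi _ _ p ?_
  rw [chi_exec N hsafe hM hw' p, chi_exec N hsafe hM hw p]
  have := (hp.map (fun t => chi (N.post t) p - chi (N.pre t) p)).sum_eq
  rw [this]

theorem cut_of_mem_visited (N : PetriNet P T) {M M' : Set P} {w : List T}
    (hw : N.enabledSeq M w) (hmem : M' ∈ N.visited M w) :
    ∃ w₂ : List T, w₂.length ≤ w.length ∧ N.enabledSeq M' w₂ ∧
      N.exec M' w₂ = N.exec M w := by
  induction w generalizing M with
  | nil =>
    simp [PetriNet.visited] at hmem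
    exact ⟨[], le_refl _, trivial, by simp [hmem, PetriNet.exec]⟩
  | cons t v ih =>
    rw [show N.visited M (t :: v) = M :: N.visited (N.fire M t) v from rfl,
      List.mem_cons] at hmem
    rcases hmem with rfl | hmem
    · exact ⟨t :: v, le_refl _, hw, rfl⟩
    · obtain ⟨w₂, h1, h2, h3⟩ := ih hw.2 hmem
      exact ⟨w₂, h1.trans (Nat.le_succ _), h2, h3⟩

theorem cut_of_dup (N : PetriNet P T) {M : Set P} {w : List T}
    (hw : N.enabledSeq M w) (hdup : ¬ (N.visited M w).Nodup) :
    ∃ w₂ : List T, w₂.length < w.length ∧ N.enabledSeq M w₂ ∧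
      N.exec M w₂ = N.exec M w := by
  induction w generalizing M with
  | nil => simp [PetriNet.visited] at hdup
  | cons t v ih =>
    by_cases hmem : M ∈ N.visited (N.fire M t) v
    · obtain ⟨w₂, h1, h2, h3⟩ := cut_of_mem_visited N hw.2 hmem
      exact ⟨w₂, Nat.lt_succ_of_le h1, h2, h3⟩
    · have hdup' : ¬ (N.visited (N.fire M t) v).Nodup := by
        intro h
        exact hdup (List.nodup_cons.mpr ⟨hmem, h⟩)
      obtain ⟨w₂, h1, h2, h3⟩ := ih hw.2 hdup'
      exact ⟨t :: w₂, Nat.succ_lt_succ h1, ⟨hw.1, h2⟩, h3⟩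

theorem exists_minimal (N : PetriNet P T) (hsafe : N.Safe) (g : Set P)
    (h : ∃ w : List T, N.enabledSeq N.M0 w ∧ N.exec N.M0 w = g) :
    ∃ w : List T, N.MinimalFrom N.M0 g w := by
  have hM0 : N.Reach N.M0 := ⟨[], trivial, rfl⟩
  obtain ⟨w, hw, he⟩ := h
  suffices H : ∀ n : ℕ, ∀ w : List T, w.length = n → N.enabledSeq N.M0 w →
      N.exec N.M0 w = g → ∃ w : List T, N.MinimalFrom N.M0 g w from
    H w.length w rfl hw he
  clear hw he w
  intro n
  induction n using Nat.strong_induction_on with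
  | _ n ih =>
    intro w hn hw he
    by_cases hmin : ∀ w' : List T, w'.Perm w → N.enabledSeq N.M0 w' →
        (N.visited N.M0 w').Nodup
    · exact ⟨w, hw, he, hmin⟩
    · push_neg at hmin
      obtain ⟨w', hperm, hw', hdup⟩ := hmin
      have he' : N.exec N.M0 w' = g := by
        rw [exec_perm N hsafe hM0 hw hw' hperm, he]
      obtain ⟨w₂, h1, h2, h3⟩ := cut_of_dup N hw' hdup
      subst hn
      exact ih w₂.length (by rw [← hperm.length_eq]; exact h1) w₂ rfl h2
        (h3.trans he')

theorem restrict_enabled (N : PetriNet P T) (U : Set T) (M : Set P)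
    (w : List {t : T // t ∉ U}) :
    (N.restrict U).enabledSeq M w ↔ N.enabledSeq M (w.map Subtype.val) := by
  induction w generalizing M with
  | nil => simp [PetriNet.enabledSeq]
  | cons t v ih =>
    simp only [PetriNet.enabledSeq, List.map_cons, ih]
    rfl

theorem restrict_exec (N : PetriNet P T) (U : Set T) (M : Set P)
    (w : List {t : T // t ∉ U}) :
    (N.restrict U).exec M w = N.exec M (w.map Subtype.val) := by
  induction w generalizing M with
  | nil => rfl
  | cons t v ih =>
    simp only [PetriNet.exec, List.map_cons, ih]
    rfl

end PetriNetAux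


/-- if no minimal firing sequence to `g` uses a transition of
`U`, then `g` is reachable in `N` iff it is reachable in the reduced net
`N \ U`. -/
theorem stmt_4 {P T : Type} (N : PetriNet P T) (hsafe : N.Safe)
    (g : Set P) (U : Set T)
    (hU : ∀ w : List T, N.MinimalFrom N.M0 g w → ∀ t ∈ w, t ∉ U) :
    (∃ w : List T, N.enabledSeq N.M0 w ∧ N.exec N.M0 w = g) ↔
    (∃ w : List {t : T // t ∉ U}, (N.restrict U).enabledSeq (N.restrict U).M0 w ∧
      (N.restrict U).exec (N.restrict U).M0 w = g) := by
  constructor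
  · intro h
    obtain ⟨w, hw, he, hmin⟩ := PetriNetAux.exists_minimal N hsafe g h
    have hnot : ∀ t ∈ w, t ∉ U := hU w ⟨hw, he, hmin⟩
    have hmap : (w.attachWith (· ∉ U) hnot).map Subtype.val = w := by
      simp [List.attachWith_map_subtype_val]
    refine ⟨w.attachWith (· ∉ U) hnot, ?_, ?_⟩
    · rw [PetriNetAux.restrict_enabled, hmap]
      exact hw
    · rw [PetriNetAux.restrict_exec, hmap]
      exact he
  · rintro ⟨w, hw, he⟩
    refine ⟨w.map Subtype.val, ?_, ?_⟩
    · exact (PetriNetAux.restrict_enabled N U _ w).mp hw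
    · rw [← PetriNetAux.restrict_exec]
      exact he
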